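/- Let G be a finite p-group with C_G(Φ(G)) ≤ Φ(G) and H the preimage of Ω₁(ζ₂(G)/ζ₁(G)). Then Aut_H(G) is nilpotent of class at most min{r,s} + 1, where p^r = exp(G/γ₂(G)) and p^s = exp(ζ(G)). -/

import Mathlib

open scoped commutatorElement in
/-- The left-normed iterated commutator `⁅⁅…⁅f 0, f 1⁆, …⁆, f n⁆` of `n + 1`
elements of a group. -/
def nestedComm {M : Type*} [Group M] : (n : ℕ) → (Fin (n + 1) → M) → M
  | 0, f => f 0
  | n + 1, f => ⁅nestedComm n fun i => f i.castSucc, f (Fin.last (n + 2 - 1))⁆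

open scoped commutatorElement

namespace AutHNil

open Subgroup

variable {G : Type*} [Group G]

def dm (σ : MulAut G) (x : G) : G := x⁻¹ * σ x

theorem dm_def (σ : MulAut G) (x : G) : dm σ x = x⁻¹ * σ x := rfl

theorem apply_eq (σ : MulAut G) (x : G) : σ x = x * dm σ x := by
  rw [dm_def]; group

theorem dm_one_apply (σ : MulAut G) : dm σ 1 = 1 := by
  rw [dm_def, map_one]; group

def HH (p : ℕ) : Set G := {h | h ∈ Subgroup.upperCentralSeries G 2 ∧ h ^ p ∈ Subgroup.center G}

def KK (p : ℕ) : Subgroup G :=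
  Subgroup.closure {w | ∃ g h : G, h ∈ HH p ∧ w = ⁅g, h⁆}

def Phi0 (p : ℕ) : Subgroup G :=
  Subgroup.closure (commutatorSet G ∪ {x | ∃ g : G, x = g ^ p})

def IsA (p : ℕ) (σ : MulAut G) : Prop := ∀ x : G, dm σ x ∈ HH p

theorem cswap {z : G} (hz : z ∈ center G) (a : G) : a * z = z * a :=
  Subgroup.mem_center_iff.mp hz a

theorem conj_central {z : G} (hz : z ∈ center G) (a : G) : a * z * a⁻¹ = z := by
  rw [cswap hz a]; group

theorem cent_collect {z : G} (hz : z ∈ center G) (a b : G) : a * z * b = a * b * z := by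
  rw [mul_assoc, ← cswap hz b, ← mul_assoc]

theorem c_center {u : G} (hu : u ∈ Subgroup.upperCentralSeries G 2) (g : G) :
    ⁅u, g⁆ ∈ center G := by
  have := Subgroup.mem_upperCentralSeries_succ_iff.mp hu g
  rwa [Subgroup.upperCentralSeries_one] at this

theorem c_center' {u : G} (hu : u ∈ Subgroup.upperCentralSeries G 2) (g : G) :
    ⁅g, u⁆ ∈ center G := by
  rw [← commutatorElement_inv]
  exact inv_mem (c_center hu g)

theorem c_mul_left {h : G} (hh : h ∈ Subgroup.upperCentralSeries G 2) (a b : G) :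
    ⁅a * b, h⁆ = ⁅a, h⁆ * ⁅b, h⁆ := by
  have e : ⁅a * b, h⁆ = a * ⁅b, h⁆ * a⁻¹ * ⁅a, h⁆ := by group
  rw [e, conj_central (c_center' hh b) a, cswap (c_center' hh b) ⁅a, h⁆]

theorem c_mul_right₂ {h' : G} (hh' : h' ∈ Subgroup.upperCentralSeries G 2) (g h : G) :
    ⁅g, h * h'⁆ = ⁅g, h⁆ * ⁅g, h'⁆ := by
  have e : ⁅g, h * h'⁆ = ⁅g, h⁆ * (h * ⁅g, h'⁆ * h⁻¹) := by group
  rw [e, conj_central (c_center' hh' g) h]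

theorem c_mul_left₂ {u' : G} (hu' : u' ∈ Subgroup.upperCentralSeries G 2) (u g : G) :
    ⁅u * u', g⁆ = ⁅u, g⁆ * ⁅u', g⁆ := by
  have e : ⁅u * u', g⁆ = u * ⁅u', g⁆ * u⁻¹ * ⁅u, g⁆ := by group
  rw [e, conj_central (c_center hu' g) u]
  exact (cswap (c_center hu' g) ⁅u, g⁆).symm

theorem c_pow_left₂ {u : G} (hu : u ∈ Subgroup.upperCentralSeries G 2) (g : G) (n : ℕ) :
    ⁅u ^ n, g⁆ = ⁅u, g⁆ ^ n := by
  induction n with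
  | zero => simp
  | succ n ih => rw [pow_succ, c_mul_left₂ hu, ih, pow_succ]

theorem c_pow_right₂ {h : G} (hh : h ∈ Subgroup.upperCentralSeries G 2) (a : G) (n : ℕ) :
    ⁅a, h ^ n⁆ = ⁅a, h⁆ ^ n := by
  induction n with
  | zero => simp
  | succ n ih => rw [pow_succ, c_mul_right₂ hh, ih, pow_succ]

def cHom {h : G} (hh : h ∈ Subgroup.upperCentralSeries G 2) : G →* Subgroup.center G where
  toFun g := ⟨⁅g, h⁆, c_center' hh g⟩
  map_one' := by ext; simp
  map_mul' a b := by ext; simp [c_mul_left hh]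

theorem cHom_apply {h : G} (hh : h ∈ Subgroup.upperCentralSeries G 2) (g : G) :
    (cHom hh g : G) = ⁅g, h⁆ := rfl

theorem c_commutator_eq_one {h : G} (hh : h ∈ Subgroup.upperCentralSeries G 2) (a b : G) :
    ⁅⁅a, b⁆, h⁆ = 1 := by
  have h1 : cHom hh ⁅a, b⁆ = ⁅cHom hh a, cHom hh b⁆ := map_commutatorElement _ _ _
  have hz : ⁅cHom hh a, cHom hh b⁆ = 1 := by
    apply commutatorElement_eq_one_iff_commute.mpr
    exact Subtype.ext (Subgroup.mem_center_iff.mp (cHom hh b).2 (cHom hh a : G))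
  have h2 := congrArg Subtype.val (h1.trans hz)
  simpa only [cHom_apply, OneMemClass.coe_one] using h2

theorem choose_succ_two (n : ℕ) : (n + 1).choose 2 = n + n.choose 2 := by
  rw [show (2 : ℕ) = 1 + 1 from rfl, Nat.choose_succ_succ, Nat.choose_one_right]

theorem mul_pow_formula {u : G} (hu : u ∈ Subgroup.upperCentralSeries G 2) (g : G) (n : ℕ) :
    (g * u) ^ n = g ^ n * u ^ n * ⁅u, g⁆ ^ n.choose 2 := by
  induction n with
  | zero => simp
  | succ n ih =>
    have hc : ⁅u, g⁆ ∈ center G := c_center hu g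
    have e1 : u ^ n * g = g * u ^ n * ⁅u, g⁆ ^ n := by
      have h := (c_pow_left₂ hu g n).symm
      have hz' : ⁅u ^ n, g⁆ ∈ center G := c_center (pow_mem hu n) g
      calc u ^ n * g = ⁅u ^ n, g⁆ * g * u ^ n := by rw [commutatorElement_def]; group
        _ = g * u ^ n * ⁅u ^ n, g⁆ := by rw [cswap hz' (g * u ^ n)]; group
        _ = g * u ^ n * ⁅u, g⁆ ^ n := by rw [h]
    calc (g * u) ^ (n + 1) = (g * u) ^ n * (g * u) := pow_succ _ _
      _ = g ^ n * u ^ n * ⁅u, g⁆ ^ n.choose 2 * (g * u) := by rw [ih]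
      _ = g ^ n * (u ^ n * g) * u * ⁅u, g⁆ ^ n.choose 2 := by
          rw [cent_collect (pow_mem hc _)]; group
      _ = g ^ n * (g * u ^ n * ⁅u, g⁆ ^ n) * u * ⁅u, g⁆ ^ n.choose 2 := by rw [e1]
      _ = g ^ n * g * u ^ n * ⁅u, g⁆ ^ n * u * ⁅u, g⁆ ^ n.choose 2 := by group
      _ = g ^ n * g * u ^ n * u * ⁅u, g⁆ ^ n * ⁅u, g⁆ ^ n.choose 2 := by
          rw [cent_collect (pow_mem hc n)]
      _ = g ^ (n + 1) * u ^ (n + 1) * ⁅u, g⁆ ^ ((n + 1).choose 2) := by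
          rw [choose_succ_two, pow_add, pow_succ g, pow_succ u]; group

theorem dm_pow {σ : MulAut G} {g : G} (hu : dm σ g ∈ Subgroup.upperCentralSeries G 2) (n : ℕ) :
    dm σ (g ^ n) = (dm σ g) ^ n * ⁅dm σ g, g⁆ ^ n.choose 2 := by
  rw [dm_def, map_pow, apply_eq σ g, mul_pow_formula hu g n]
  group

theorem dm_mul (σ : MulAut G) (a b : G) :
    dm σ (a * b) = b⁻¹ * dm σ a * b * dm σ b := by
  simp only [dm_def, map_mul]; group

theorem dm_mul_of_central {σ : MulAut G} {a : G} (ha : dm σ a ∈ center G) (b : G) :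
    dm σ (a * b) = dm σ a * dm σ b := by
  rw [dm_mul, cent_collect ha b⁻¹ b]; group

theorem dm_mul_of_central' {σ : MulAut G} {b : G} (hb : b ∈ center G) (a : G) :
    dm σ (a * b) = dm σ a * dm σ b := by
  rw [dm_mul, ← cswap (inv_mem hb) (dm σ a)]; group

theorem dm_inv_of_central {σ : MulAut G} {a : G} (ha : dm σ a ∈ center G) :
    dm σ a⁻¹ = (dm σ a)⁻¹ := by
  have h := dm_mul σ a⁻¹ a
  rw [inv_mul_cancel, dm_one_apply] at h
  calc dm σ a⁻¹ = a * (a⁻¹ * dm σ a⁻¹ * a * dm σ a) * (dm σ a)⁻¹ * a⁻¹ := by group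
    _ = a * 1 * (dm σ a)⁻¹ * a⁻¹ := by rw [← h]
    _ = a * (dm σ a)⁻¹ * a⁻¹ := by group
    _ = (dm σ a)⁻¹ := conj_central (inv_mem ha) a

end AutHNil

section Chunk2
namespace AutHNil

open Subgroup
open scoped Pointwise

variable {G : Type*} [Group G]

theorem pow_mem_phi0 (p : ℕ) (g : G) : g ^ p ∈ Phi0 p :=
  Subgroup.subset_closure (Or.inr ⟨g, rfl⟩)

theorem comm_mem_phi0 (p : ℕ) (a b : G) : ⁅a, b⁆ ∈ Phi0 p :=
  Subgroup.subset_closure (Or.inl ⟨a, b, rfl⟩)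

theorem commutator_le_phi0 (p : ℕ) : commutator G ≤ (Phi0 p : Subgroup G) := by
  rw [commutator_eq_closure]
  exact closure_mono Set.subset_union_left

theorem normal_of_phi0_le {p : ℕ} {M : Subgroup G} (hM : Phi0 p ≤ M) : M.Normal := by
  constructor
  intro n hn g
  have h1 : ⁅g, n⁆ ∈ M := hM (comm_mem_phi0 p g n)
  have h2 : g * n * g⁻¹ = ⁅g, n⁆ * n := by group
  rw [h2]; exact mul_mem h1 hn

theorem pow_reduce {Q : Type*} [Group Q] {p : ℕ} (hp : 0 < p) {b : Q} (hb : b ^ p = 1)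
    (n : ℕ) : b ^ n = b ^ (n % p) := by
  conv_lhs => rw [← Nat.div_add_mod n p]
  rw [pow_add, pow_mul, hb, one_pow, one_mul]

theorem zpow_reduce {Q : Type*} [Group Q] {p : ℕ} (hp : 0 < p) {b : Q} (hb : b ^ p = 1)
    (k : ℤ) : ∃ t : ℕ, t < p ∧ b ^ k = b ^ t := by
  have hp' : (0 : ℤ) < p := Int.natCast_pos.mpr hp
  refine ⟨(k % p).toNat, ?_, ?_⟩
  · have := Int.emod_lt_of_pos k hp'
    omega
  · have hnn : (0 : ℤ) ≤ k % p := Int.emod_nonneg k (by positivity)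
    calc b ^ k = b ^ ((p : ℤ) * (k / p) + k % p) := by rw [Int.mul_ediv_add_emod]
      _ = (b ^ (p : ℤ)) ^ (k / p) * b ^ (k % p) := by rw [zpow_add, zpow_mul]
      _ = b ^ (k % p) := by
          rw [zpow_natCast, hb, one_zpow, one_mul]
      _ = b ^ ((k % p).toNat : ℤ) := by rw [Int.toNat_of_nonneg hnn]
      _ = b ^ (k % p).toNat := zpow_natCast _ _

theorem zpowers_swap {Q : Type*} [Group Q] {p : ℕ} (hp : p.Prime) {a b : Q}
    (hab : a ∈ zpowers b) (ha : a ≠ 1) (hb : b ^ p = 1) : b ∈ zpowers a := by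
  obtain ⟨k, hk⟩ := mem_zpowers_iff.mp hab
  obtain ⟨t, htp, ht⟩ := zpow_reduce hp.pos hb k
  have hat : a = b ^ t := by rw [← hk, ht]
  have ht0 : t ≠ 0 := by
    rintro rfl
    rw [pow_zero] at hat
    exact ha hat
  have hco : Nat.Coprime t p :=
    Nat.coprime_comm.mp ((Nat.Prime.coprime_iff_not_dvd hp).mpr
      (Nat.not_dvd_of_pos_of_lt (Nat.pos_of_ne_zero ht0) htp))
  obtain ⟨c, -, hc⟩ := Nat.exists_mul_mod_eq_one_of_coprime hco hp.one_lt
  have : b = a ^ c := by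
    rw [hat, ← pow_mul, pow_reduce hp.pos hb, hc, pow_one]
  rw [this]
  exact pow_mem (mem_zpowers a) c

theorem isCoatom_of {p : ℕ} (hp : p.Prime) {M : Subgroup G} (hphi : Phi0 p ≤ M) {x : G}
    (hx : x ∉ M) (hmax : ∀ N : Subgroup G, M < N → x ∈ N) : IsCoatom M := by
  haveI : M.Normal := normal_of_phi0_le hphi
  constructor
  · intro h
    rw [h] at hx
    exact hx trivial
  · intro N hN
    have hxN : x ∈ N := hmax N hN
    have hx1 : (x : G ⧸ M) ≠ 1 := fun h => hx ((QuotientGroup.eq_one_iff x).mp h)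
    have key : ∀ y : G, (y : G ⧸ M) ∈ Subgroup.zpowers (x : G ⧸ M) := by
      intro y
      by_cases hy : y ∈ M
      · rw [(QuotientGroup.eq_one_iff y).mpr hy]
        exact one_mem _
      · have hlt : M < M ⊔ Subgroup.zpowers y := by
          refine lt_of_le_of_ne le_sup_left (fun h => hy ?_)
          rw [h]
          exact SetLike.le_def.mp le_sup_right (Subgroup.mem_zpowers y)
        have hxMy : x ∈ M ⊔ Subgroup.zpowers y := hmax _ hlt
        have h1 : (x : G ⧸ M) ∈ Subgroup.zpowers (y : G ⧸ M) := by
          rw [sup_comm] at hxMy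
          have hxMy' : x ∈ (Subgroup.zpowers y : Set G) * (M : Set G) := by
            rw [← Subgroup.mul_normal]
            exact hxMy
          obtain ⟨a, ha, m, hm, hamx⟩ := hxMy'
          obtain ⟨k, hk⟩ := mem_zpowers_iff.mp ha
          refine mem_zpowers_iff.mpr ⟨k, ?_⟩
          rw [← QuotientGroup.mk_zpow, hk, ← hamx, QuotientGroup.mk_mul,
            (QuotientGroup.eq_one_iff m).mpr hm, mul_one]
        have hyp1 : ((y : G ⧸ M)) ^ p = 1 := by
          rw [← QuotientGroup.mk_pow, QuotientGroup.eq_one_iff]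
          exact hphi (pow_mem_phi0 p y)
        exact zpowers_swap hp h1 hx1 hyp1
    rw [eq_top_iff]
    intro g _
    obtain ⟨k, hk⟩ := mem_zpowers_iff.mp (key g)
    have : ((x ^ k)⁻¹ * g : G) ∈ M := by
      rw [← QuotientGroup.eq_one_iff, QuotientGroup.mk_mul,
        QuotientGroup.mk_inv, QuotientGroup.mk_zpow, hk]
      group
    have hg : g = x ^ k * ((x ^ k)⁻¹ * g) := by group
    rw [hg]
    exact mul_mem (zpow_mem hxN k) (hN.le this)

theorem frattini_le_phi0 (p : ℕ) (hp : p.Prime) [Finite G] :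
    frattini G ≤ (Phi0 p : Subgroup G) := by
  intro x hx
  by_contra hxp
  haveI : Finite (Subgroup G) :=
    Finite.of_injective (fun H : Subgroup G => (H : Set G)) SetLike.coe_injective
  obtain ⟨M, hMS, hMmax⟩ := Set.Finite.exists_maximalFor id
    {N : Subgroup G | Phi0 p ≤ N ∧ x ∉ N} (Set.toFinite _) ⟨Phi0 p, le_refl _, hxp⟩
  have hmax : ∀ N : Subgroup G, M < N → x ∈ N := by
    intro N hN
    by_contra hxN
    exact hN.ne (le_antisymm hN.le (hMmax ⟨hMS.1.trans hN.le, hxN⟩ hN.le))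
  exact hMS.2 (frattini_le_coatom (isCoatom_of hp hMS.1 hMS.2 hmax) hx)

end AutHNil
end Chunk2

section Chunk3
namespace AutHNil

open Subgroup

variable {G : Type*} [Group G] {p r : ℕ}

theorem c_pow_left₁ {h : G} (hh : h ∈ Subgroup.upperCentralSeries G 2) (a : G) (n : ℕ) :
    ⁅a ^ n, h⁆ = ⁅a, h⁆ ^ n := by
  induction n with
  | zero => simp
  | succ n ih => rw [pow_succ, c_mul_left hh, ih, pow_succ]

theorem c_hh_pow_eq_one {h : G} (hh : h ∈ HH p) (g : G) : ⁅g, h⁆ ^ p = 1 := by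
  rw [← c_pow_right₂ hh.1]
  exact commutatorElement_eq_one_iff_commute.mpr (cswap hh.2 g)

theorem KK_le_center : (KK p : Subgroup G) ≤ center G := by
  apply (Subgroup.closure_le _).mpr
  rintro w ⟨g, h, hh, rfl⟩
  exact c_center' hh.1 g

theorem KK_pow_eq_one {w : G} (hw : w ∈ KK p) : w ^ p = 1 := by
  let T : Subgroup G :=
    { carrier := {w | w ∈ center G ∧ w ^ p = 1}
      one_mem' := ⟨one_mem _, one_pow p⟩
      mul_mem' := by
        rintro a b ⟨hac, hap⟩ ⟨hbc, hbp⟩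
        refine ⟨mul_mem hac hbc, ?_⟩
        rw [Commute.mul_pow (cswap hbc a), hap, hbp, one_mul]
      inv_mem' := by
        rintro a ⟨hac, hap⟩
        exact ⟨inv_mem hac, by rw [inv_pow, hap, inv_one]⟩ }
  have hKT : (KK p : Subgroup G) ≤ T := by
    apply (Subgroup.closure_le _).mpr
    rintro w ⟨g, h, hh, rfl⟩
    exact ⟨c_center' hh.1 g, c_hh_pow_eq_one hh g⟩
  exact (hKT hw).2

theorem HH_centralizes_phi0 {h : G} (hh : h ∈ HH p) :
    (Phi0 p : Subgroup G) ≤ Subgroup.centralizer {h} := by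
  apply (Subgroup.closure_le _).mpr
  rintro t (⟨a, b, rfl⟩ | ⟨g, rfl⟩)
  · apply Subgroup.mem_centralizer_iff.mpr
    rintro y rfl
    exact (commutatorElement_eq_one_iff_commute.mp (c_commutator_eq_one hh.1 a b)).symm
  · apply Subgroup.mem_centralizer_iff.mpr
    rintro y rfl
    have h1 : ⁅g ^ p, y⁆ = 1 := by
      rw [c_pow_left₁ hh.1]
      exact c_hh_pow_eq_one hh g
    exact (commutatorElement_eq_one_iff_commute.mp h1).symm

theorem HH_le_phi0 [Finite G] (hp : p.Prime)
    (hc : Subgroup.centralizer ((frattini G : Subgroup G) : Set G) ≤ frattini G)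
    {h : G} (hh : h ∈ HH p) : h ∈ Phi0 p := by
  apply frattini_le_phi0 p hp
  apply hc
  apply Subgroup.mem_centralizer_iff.mpr
  intro g hg
  have hgp : g ∈ Subgroup.centralizer {h} :=
    HH_centralizes_phi0 hh (frattini_le_phi0 p hp hg)
  exact (Subgroup.mem_centralizer_iff.mp hgp h rfl).symm

theorem HH_comm [Finite G] (hp : p.Prime)
    (hc : Subgroup.centralizer ((frattini G : Subgroup G) : Set G) ≤ frattini G)
    {h h' : G} (hh : h ∈ HH p) (hh' : h' ∈ HH p) : h * h' = h' * h :=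
  Subgroup.mem_centralizer_iff.mp (HH_centralizes_phi0 hh (HH_le_phi0 hp hc hh')) h rfl

theorem HH_one : (1 : G) ∈ HH p :=
  ⟨one_mem _, by rw [one_pow]; exact one_mem _⟩

theorem HH_mul [Finite G] (hp : p.Prime)
    (hc : Subgroup.centralizer ((frattini G : Subgroup G) : Set G) ≤ frattini G)
    {h h' : G} (hh : h ∈ HH p) (hh' : h' ∈ HH p) : h * h' ∈ HH p := by
  refine ⟨mul_mem hh.1 hh'.1, ?_⟩
  rw [Commute.mul_pow (HH_comm hp hc hh hh')]
  exact mul_mem hh.2 hh'.2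

theorem HH_inv {h : G} (hh : h ∈ HH p) : h⁻¹ ∈ HH p :=
  ⟨inv_mem hh.1, by rw [inv_pow]; exact inv_mem hh.2⟩

theorem c_expand {u v : G} (hu : u ∈ Subgroup.upperCentralSeries G 2)
    (hv : v ∈ Subgroup.upperCentralSeries G 2) (huv : u * v = v * u) (g h : G) :
    ⁅g * u, h * v⁆ = ⁅g, h⁆ * ⁅u, h⁆ * ⁅g, v⁆ := by
  rw [c_mul_right₂ hv (g * u) h, c_mul_left₂ hu g h, c_mul_left₂ hu g v,
    commutatorElement_eq_one_iff_commute.mpr huv, mul_one]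

theorem aut_map_commutator (σ : MulAut G) (a b : G) : σ ⁅a, b⁆ = ⁅σ a, σ b⁆ := by
  simp [commutatorElement_def, map_mul, map_inv]

theorem dm_commutator (σ : MulAut G) (hσ : IsA p σ)
    [Finite G] (hp : p.Prime)
    (hc : Subgroup.centralizer ((frattini G : Subgroup G) : Set G) ≤ frattini G)
    (a b : G) : dm σ ⁅a, b⁆ = ⁅dm σ a, b⁆ * ⁅a, dm σ b⁆ := by
  have e1 : σ ⁅a, b⁆ = ⁅a, b⁆ * ⁅dm σ a, b⁆ * ⁅a, dm σ b⁆ := by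
    rw [aut_map_commutator, apply_eq σ a, apply_eq σ b,
      c_expand (hσ a).1 (hσ b).1 (HH_comm hp hc (hσ a) (hσ b)) a b]
  rw [dm_def, e1]
  group

theorem comm_mem_KK_left {u : G} (hu : u ∈ HH p) (b : G) : ⁅u, b⁆ ∈ KK p := by
  rw [← commutatorElement_inv]
  exact inv_mem (Subgroup.subset_closure ⟨b, u, hu, rfl⟩)

theorem comm_mem_KK_right {v : G} (hv : v ∈ HH p) (a : G) : ⁅a, v⁆ ∈ KK p :=
  Subgroup.subset_closure ⟨a, v, hv, rfl⟩

theorem dm_gamma2_mem_KK (σ : MulAut G) (hσ : IsA p σ)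
    [Finite G] (hp : p.Prime)
    (hc : Subgroup.centralizer ((frattini G : Subgroup G) : Set G) ≤ frattini G) :
    ∀ t ∈ commutator G, dm σ t ∈ KK p := by
  let T : Subgroup G :=
    { carrier := {t | dm σ t ∈ KK p}
      one_mem' := by
        show dm σ 1 ∈ KK p
        rw [dm_one_apply]; exact one_mem _
      mul_mem' := by
        intro a b ha hb
        show dm σ (a * b) ∈ KK p
        rw [dm_mul_of_central (KK_le_center ha) b]
        exact mul_mem ha hb
      inv_mem' := by
        intro a ha
        show dm σ a⁻¹ ∈ KK p
        rw [dm_inv_of_central (KK_le_center ha)]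
        exact inv_mem ha }
  intro t ht
  have : commutator G ≤ T := by
    rw [commutator_eq_closure]
    apply (Subgroup.closure_le _).mpr
    rintro w ⟨a, b, rfl⟩
    show dm σ ⁅a, b⁆ ∈ KK p
    rw [dm_commutator σ hσ hp hc a b]
    exact mul_mem (comm_mem_KK_left (hσ a) b) (comm_mem_KK_right (hσ b) a)
  exact this ht

theorem pow_pr_mem_commutator (hr : Monoid.exponent (G ⧸ commutator G) = p ^ r) (g : G) :
    g ^ p ^ r ∈ commutator G := by
  apply (QuotientGroup.eq_one_iff _).mp
  rw [QuotientGroup.mk_pow, ← hr]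
  exact Monoid.pow_exponent_eq_one _

theorem dm_val_pow_pr_mem_KK (σ : MulAut G) (hσ : IsA p σ)
    [Finite G] (hp : p.Prime)
    (hc : Subgroup.centralizer ((frattini G : Subgroup G) : Set G) ≤ frattini G)
    (hr : Monoid.exponent (G ⧸ commutator G) = p ^ r) (g : G) :
    (dm σ g) ^ p ^ r ∈ KK p := by
  have e := dm_pow (hσ g).1 (p ^ r)
  have e2 : (dm σ g) ^ p ^ r = dm σ (g ^ p ^ r) * (⁅dm σ g, g⁆ ^ (p ^ r).choose 2)⁻¹ := by
    rw [e]; group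
  rw [e2]
  exact mul_mem (dm_gamma2_mem_KK σ hσ hp hc _ (pow_pr_mem_commutator hr g))
    (inv_mem (pow_mem (comm_mem_KK_left (hσ g) g) _))

theorem dm_phi0_decomp (σ : MulAut G) (hσ : IsA p σ)
    [Finite G] (hp : p.Prime)
    (hc : Subgroup.centralizer ((frattini G : Subgroup G) : Set G) ≤ frattini G)
    (hr : Monoid.exponent (G ⧸ commutator G) = p ^ r) :
    ∀ t ∈ (Phi0 p : Subgroup G), ∃ v w : G,
      v ∈ HH p ∧ v ^ p ^ r ∈ KK p ∧ w ∈ KK p ∧ dm σ t = v ^ p * w := by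
  have hdec : ∀ v w : G, v ∈ HH p → w ∈ KK p → v ^ p * w ∈ center G := fun v w hv hw =>
    mul_mem hv.2 (KK_le_center hw)
  let T : Subgroup G :=
    { carrier := {t | ∃ v w : G, v ∈ HH p ∧ v ^ p ^ r ∈ KK p ∧ w ∈ KK p ∧ dm σ t = v ^ p * w}
      one_mem' := ⟨1, 1, HH_one, by rw [one_pow]; exact one_mem _, one_mem _, by
        rw [dm_one_apply, one_pow, one_mul]⟩
      mul_mem' := by
        rintro a b ⟨v, w, hv, hvr, hw, ha⟩ ⟨v', w', hv', hvr', hw', hb⟩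
        refine ⟨v * v', w * w', HH_mul hp hc hv hv', ?_, mul_mem hw hw', ?_⟩
        · rw [Commute.mul_pow (HH_comm hp hc hv hv')]
          exact mul_mem hvr hvr'
        · have hda : dm σ a ∈ center G := ha ▸ hdec v w hv hw
          rw [dm_mul_of_central hda b, ha, hb]
          calc v ^ p * w * (v' ^ p * w')
              = v ^ p * (w * v' ^ p) * w' := by group
            _ = v ^ p * (v' ^ p * w) * w' := by rw [cswap hv'.2 w]
            _ = (v * v') ^ p * (w * w') := by
                rw [Commute.mul_pow (HH_comm hp hc hv hv')]; group
      inv_mem' := by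
        rintro a ⟨v, w, hv, hvr, hw, ha⟩
        refine ⟨v⁻¹, w⁻¹, HH_inv hv, ?_, inv_mem hw, ?_⟩
        · rw [inv_pow]; exact inv_mem hvr
        · have hda : dm σ a ∈ center G := ha ▸ hdec v w hv hw
          rw [dm_inv_of_central hda, ha]
          calc (v ^ p * w)⁻¹ = w⁻¹ * (v ^ p)⁻¹ := by group
            _ = (v ^ p)⁻¹ * w⁻¹ := (cswap (inv_mem (KK_le_center hw)) _).symm
            _ = v⁻¹ ^ p * w⁻¹ := by rw [inv_pow] }
  have hle : (Phi0 p : Subgroup G) ≤ T := by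
    apply (Subgroup.closure_le _).mpr
    rintro t (⟨a, b, rfl⟩ | ⟨g, rfl⟩)
    · refine ⟨1, dm σ ⁅a, b⁆, HH_one, by rw [one_pow]; exact one_mem _, ?_, by
        rw [one_pow, one_mul]⟩
      rw [dm_commutator σ hσ hp hc a b]
      exact mul_mem (comm_mem_KK_left (hσ a) b) (comm_mem_KK_right (hσ b) a)
    · refine ⟨dm σ g, ⁅dm σ g, g⁆ ^ p.choose 2, hσ g,
        dm_val_pow_pr_mem_KK σ hσ hp hc hr g,
        pow_mem (comm_mem_KK_left (hσ g) g) _, ?_⟩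
      exact dm_pow (hσ g).1 p
  exact fun t ht => hle ht

theorem sigma_fixes_KK (σ : MulAut G) (hσ : IsA p σ)
    [Finite G] (hp : p.Prime)
    (hc : Subgroup.centralizer ((frattini G : Subgroup G) : Set G) ≤ frattini G)
    (hr : Monoid.exponent (G ⧸ commutator G) = p ^ r) :
    ∀ w ∈ (KK p : Subgroup G), σ w = w := by
  let T : Subgroup G :=
    { carrier := {t | σ t = t}
      one_mem' := map_one σ
      mul_mem' := by
        intro a b ha hb
        show σ (a * b) = a * b
        rw [map_mul, ha, hb]
      inv_mem' := by
        intro a ha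
        show σ a⁻¹ = a⁻¹
        rw [map_inv, ha] }
  have hle : (KK p : Subgroup G) ≤ T := by
    apply (Subgroup.closure_le _).mpr
    rintro t ⟨g, h, hh, rfl⟩
    show σ ⁅g, h⁆ = ⁅g, h⁆
    have e1 : σ ⁅g, h⁆ = ⁅g, h⁆ * ⁅dm σ g, h⁆ * ⁅g, dm σ h⁆ := by
      rw [aut_map_commutator, apply_eq σ g, apply_eq σ h,
        c_expand (hσ g).1 (hσ h).1 (HH_comm hp hc (hσ g) (hσ h)) g h]
    have e2 : ⁅dm σ g, h⁆ = 1 :=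
      commutatorElement_eq_one_iff_commute.mpr (HH_comm hp hc (hσ g) hh)
    have e3 : ⁅g, dm σ h⁆ = 1 := by
      obtain ⟨v, w, hv, hvr, hw, hd⟩ :=
        dm_phi0_decomp σ hσ hp hc hr h (HH_le_phi0 hp hc hh)
      have : dm σ h ∈ center G := hd ▸ mul_mem hv.2 (KK_le_center hw)
      exact commutatorElement_eq_one_iff_commute.mpr (cswap this g)
    rw [e1, e2, e3, mul_one, mul_one]
  exact fun w hw => hle hw

theorem dm_KK_eq_one (σ : MulAut G) (hσ : IsA p σ)
    [Finite G] (hp : p.Prime)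
    (hc : Subgroup.centralizer ((frattini G : Subgroup G) : Set G) ≤ frattini G)
    (hr : Monoid.exponent (G ⧸ commutator G) = p ^ r)
    {w : G} (hw : w ∈ KK p) : dm σ w = 1 := by
  rw [dm_def, sigma_fixes_KK σ hσ hp hc hr w hw]
  group

end AutHNil
end Chunk3

section Chunk4
namespace AutHNil

open Subgroup

variable {G : Type*} [Group G] {p r : ℕ}

/-- level-`k` invariant for automorphisms in the derived chain. -/
def Lev (p r k : ℕ) (ρ : MulAut G) : Prop :=
  ∀ x : G, ∃ h w : G, h ∈ HH p ∧ h ^ p ^ r ∈ KK p ∧ w ∈ KK p ∧ dm ρ x = h ^ p ^ k * w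

theorem Lev_dm_central {ρ : MulAut G} {k₀ : ℕ} (hL : Lev p r (k₀ + 1) ρ) (x : G) :
    dm ρ x ∈ center G := by
  obtain ⟨h, w, hh, _, hw, hd⟩ := hL x
  rw [hd]
  refine mul_mem ?_ (KK_le_center hw)
  rw [pow_succ' p k₀, pow_mul]
  exact pow_mem hh.2 _

theorem dm_hom_commutator {ρ : MulAut G} (hcent : ∀ x, dm ρ x ∈ center G) (a b : G) :
    dm ρ ⁅a, b⁆ = 1 := by
  have h1 : MonoidHom.mk' (dm ρ) (fun a b => dm_mul_of_central (hcent a) b) ⁅a, b⁆ =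
      ⁅dm ρ a, dm ρ b⁆ := map_commutatorElement _ _ _
  have h2 : ⁅dm ρ a, dm ρ b⁆ = 1 :=
    commutatorElement_eq_one_iff_commute.mpr (cswap (hcent b) (dm ρ a))
  exact h1.trans h2

theorem dm_hom_pow {ρ : MulAut G} (hcent : ∀ x, dm ρ x ∈ center G) (g : G) (n : ℕ) :
    dm ρ (g ^ n) = (dm ρ g) ^ n :=
  map_pow (MonoidHom.mk' (dm ρ) (fun a b => dm_mul_of_central (hcent a) b)) g n

theorem comp_apply_eq (σ τ : MulAut G) (x : G) :
    (σ * τ) x = x * dm σ x * dm τ x * dm σ (dm τ x) := by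
  rw [MulAut.mul_apply, apply_eq τ x, map_mul, apply_eq σ x, apply_eq σ (dm τ x)]
  group

theorem dm_bracket (σ τ : MulAut G)
    (hcomm : ∀ x : G, dm σ x * dm τ x = dm τ x * dm σ x) (y : G) :
    dm ⁅σ, τ⁆ y =
      (dm τ (dm σ ((τ * σ)⁻¹ y)))⁻¹ * dm σ (dm τ ((τ * σ)⁻¹ y)) := by
  set x := (τ * σ)⁻¹ y with hxdef
  have hyx : (τ * σ) x = y := by
    rw [hxdef, MulAut.inv_def]
    exact MulEquiv.apply_symm_apply _ y
  have hq : ⁅σ, τ⁆ * (τ * σ) = σ * τ := by group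
  have e0 : ⁅σ, τ⁆ y = (σ * τ) x := by
    calc ⁅σ, τ⁆ y = ⁅σ, τ⁆ ((τ * σ) x) := by rw [hyx]
      _ = (⁅σ, τ⁆ * (τ * σ)) x := by simp [MulAut.mul_apply]
      _ = (σ * τ) x := by rw [hq]
  have e1 : (σ * τ) x = x * dm σ x * dm τ x * dm σ (dm τ x) := comp_apply_eq σ τ x
  have e2 : (τ * σ) x = x * dm τ x * dm σ x * dm τ (dm σ x) := comp_apply_eq τ σ x
  have h1 : (dm σ x)⁻¹ * (dm τ x)⁻¹ * (dm σ x * dm τ x) = 1 := by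
    rw [hcomm x]; group
  rw [dm_def, e0, e1, ← hyx, e2]
  calc (x * dm τ x * dm σ x * dm τ (dm σ x))⁻¹ * (x * dm σ x * dm τ x * dm σ (dm τ x))
      = (dm τ (dm σ x))⁻¹ * ((dm σ x)⁻¹ * (dm τ x)⁻¹ * (dm σ x * dm τ x)) * dm σ (dm τ x) := by
        group
    _ = (dm τ (dm σ x))⁻¹ * dm σ (dm τ x) := by rw [h1]; group

theorem Lev_one [Finite G] (hp : p.Prime)
    (hc : Subgroup.centralizer ((frattini G : Subgroup G) : Set G) ≤ frattini G)
    (hr : Monoid.exponent (G ⧸ commutator G) = p ^ r)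
    {σ τ : MulAut G} (hσ : IsA p σ) (hτ : IsA p τ) : Lev p r 1 ⁅σ, τ⁆ := by
  intro y
  have hb := dm_bracket σ τ (fun x => HH_comm hp hc (hσ x) (hτ x)) y
  set x := (τ * σ)⁻¹ y with hxdef
  obtain ⟨v, w, hv, hvr, hw, hd1⟩ :=
    dm_phi0_decomp τ hτ hp hc hr (dm σ x) (HH_le_phi0 hp hc (hσ x))
  obtain ⟨v', w', hv', hvr', hw', hd2⟩ :=
    dm_phi0_decomp σ hσ hp hc hr (dm τ x) (HH_le_phi0 hp hc (hτ x))
  refine ⟨v⁻¹ * v', w⁻¹ * w', HH_mul hp hc (HH_inv hv) hv', ?_,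
    mul_mem (inv_mem hw) hw', ?_⟩
  · rw [Commute.mul_pow (HH_comm hp hc (HH_inv hv) hv'), inv_pow]
    exact mul_mem (inv_mem hvr) hvr'
  · rw [hb, hd1, hd2, pow_one p,
      Commute.mul_pow (HH_comm hp hc (HH_inv hv) hv'), inv_pow]
    have hz : (v ^ p)⁻¹ * v' ^ p ∈ center G := mul_mem (inv_mem hv.2) hv'.2
    calc (v ^ p * w)⁻¹ * (v' ^ p * w')
        = w⁻¹ * ((v ^ p)⁻¹ * v' ^ p) * w' := by group
      _ = (v ^ p)⁻¹ * v' ^ p * w⁻¹ * w' := by rw [cswap hz w⁻¹]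
      _ = (v ^ p)⁻¹ * v' ^ p * (w⁻¹ * w') := by group

theorem Lev_succ [Finite G] (hp : p.Prime)
    (hc : Subgroup.centralizer ((frattini G : Subgroup G) : Set G) ≤ frattini G)
    (hr : Monoid.exponent (G ⧸ commutator G) = p ^ r)
    {σ ρ : MulAut G} (hσ : IsA p σ) {k₀ : ℕ} (hL : Lev p r (k₀ + 1) ρ) :
    Lev p r (k₀ + 2) ⁅ρ, σ⁆ := by
  have hcent : ∀ x, dm ρ x ∈ center G := Lev_dm_central hL
  have hterm2 : ∀ t ∈ (Phi0 p : Subgroup G), ∃ h : G,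
      h ∈ HH p ∧ h ^ p ^ r ∈ KK p ∧ dm ρ t = h ^ p ^ (k₀ + 1 + 1) := by
    let T : Subgroup G :=
      { carrier := {t | ∃ h : G, h ∈ HH p ∧ h ^ p ^ r ∈ KK p ∧ dm ρ t = h ^ p ^ (k₀ + 1 + 1)}
        one_mem' := ⟨1, HH_one, by rw [one_pow]; exact one_mem _, by
          rw [dm_one_apply, one_pow]⟩
        mul_mem' := by
          rintro a b ⟨h, hh, hhr, ha⟩ ⟨h', hh', hhr', hb⟩
          refine ⟨h * h', HH_mul hp hc hh hh', ?_, ?_⟩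
          · rw [Commute.mul_pow (HH_comm hp hc hh hh')]
            exact mul_mem hhr hhr'
          · rw [dm_mul_of_central (hcent a) b, ha, hb,
              Commute.mul_pow (HH_comm hp hc hh hh')]
        inv_mem' := by
          rintro a ⟨h, hh, hhr, ha⟩
          refine ⟨h⁻¹, HH_inv hh, by rw [inv_pow]; exact inv_mem hhr, ?_⟩
          rw [dm_inv_of_central (hcent a), ha, inv_pow] }
    have hle : (Phi0 p : Subgroup G) ≤ T := by
      apply (Subgroup.closure_le _).mpr
      rintro t (⟨a, b, rfl⟩ | ⟨g, rfl⟩)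
      · exact ⟨1, HH_one, by rw [one_pow]; exact one_mem _, by
          rw [dm_hom_commutator hcent, one_pow]⟩
      · obtain ⟨h, w, hh, hhr, hw, hd⟩ := hL g
        refine ⟨h, hh, hhr, ?_⟩
        rw [dm_hom_pow hcent, hd,
          Commute.mul_pow (cswap (KK_le_center hw) (h ^ p ^ (k₀ + 1))),
          KK_pow_eq_one hw, mul_one, ← pow_mul, ← pow_succ]
    exact fun t ht => hle ht
  intro y
  have hb := dm_bracket ρ σ (fun x => (cswap (hcent x) (dm σ x)).symm) y
  set x := (σ * ρ)⁻¹ y with hxdef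
  obtain ⟨h₀, hh₀, hh₀r, hd₀⟩ := hterm2 (dm σ x) (HH_le_phi0 hp hc (hσ x))
  obtain ⟨h, w, hh, hhr, hw, hd⟩ := hL x
  obtain ⟨v, w', hv, hvr, hw', hdv⟩ :=
    dm_phi0_decomp σ hσ hp hc hr h (HH_le_phi0 hp hc hh)
  have hterm1 : dm σ (dm ρ x) = v ^ p ^ (k₀ + 1 + 1) := by
    have e2 : ⁅dm σ h, h⁆ = 1 :=
      commutatorElement_eq_one_iff_commute.mpr (HH_comm hp hc (hσ h) hh)
    have e4 : (dm σ h) ^ p ^ (k₀ + 1) = v ^ p ^ (k₀ + 1 + 1) := by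
      have ew : w' ^ p ^ (k₀ + 1) = 1 := by
        rw [pow_succ' p k₀, pow_mul, KK_pow_eq_one hw', one_pow]
      rw [hdv, Commute.mul_pow ((cswap (KK_le_center hw') (v ^ p))),
        ew, mul_one, ← pow_mul, ← pow_succ']
    rw [hd, dm_mul_of_central' (KK_le_center hw) _,
      dm_KK_eq_one σ hσ hp hc hr hw, mul_one,
      dm_pow (hσ h).1, e2, one_pow, mul_one, e4]
  refine ⟨v⁻¹ * h₀, 1, HH_mul hp hc (HH_inv hv) hh₀, ?_, one_mem _, ?_⟩
  · rw [Commute.mul_pow (HH_comm hp hc (HH_inv hv) hh₀), inv_pow]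
    exact mul_mem (inv_mem hvr) hh₀r
  · rw [hb, hterm1, hd₀, mul_one,
      Commute.mul_pow (HH_comm hp hc (HH_inv hv) hh₀), inv_pow]

theorem Lev_final [Finite G] (hp : p.Prime)
    (hc : Subgroup.centralizer ((frattini G : Subgroup G) : Set G) ≤ frattini G)
    (hr : Monoid.exponent (G ⧸ commutator G) = p ^ r)
    {σ ρ : MulAut G} (hσ : IsA p σ) {m₀ : ℕ} (hL : Lev p r (m₀ + 1) ρ)
    (hfin : (m₀ + 1 = r) ∨ (∀ z ∈ center G, z ^ p ^ (m₀ + 1) = 1)) :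
    ⁅ρ, σ⁆ = 1 := by
  have hcent : ∀ x, dm ρ x ∈ center G := Lev_dm_central hL
  have hA : ∀ t ∈ (Phi0 p : Subgroup G), dm ρ t = 1 := by
    let T : Subgroup G :=
      { carrier := {t | dm ρ t = 1}
        one_mem' := dm_one_apply ρ
        mul_mem' := by
          intro a b ha hb
          show dm ρ (a * b) = 1
          rw [dm_mul_of_central (hcent a) b, ha, hb, mul_one]
        inv_mem' := by
          intro a ha
          show dm ρ a⁻¹ = 1
          rw [dm_inv_of_central (hcent a), ha, inv_one] }
    have hle : (Phi0 p : Subgroup G) ≤ T := by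
      apply (Subgroup.closure_le _).mpr
      rintro t (⟨a, b, rfl⟩ | ⟨g, rfl⟩)
      · exact dm_hom_commutator hcent a b
      · show dm ρ (g ^ p) = 1
        obtain ⟨h, w, hh, hhr, hw, hd⟩ := hL g
        rw [dm_hom_pow hcent, hd,
          Commute.mul_pow (cswap (KK_le_center hw) (h ^ p ^ (m₀ + 1))),
          KK_pow_eq_one hw, mul_one, ← pow_mul, ← pow_succ]
        rcases hfin with hmr | hexp
        · rw [pow_succ, pow_mul, hmr]
          exact KK_pow_eq_one hhr
        · rw [pow_succ', pow_mul]
          exact hexp _ hh.2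
    exact fun t ht => hle ht
  have hB : ∀ x : G, dm σ (dm ρ x) = 1 := by
    intro x
    obtain ⟨h, w, hh, hhr, hw, hd⟩ := hL x
    obtain ⟨v, w', hv, hvr, hw', hdv⟩ :=
      dm_phi0_decomp σ hσ hp hc hr h (HH_le_phi0 hp hc hh)
    have e2 : ⁅dm σ h, h⁆ = 1 :=
      commutatorElement_eq_one_iff_commute.mpr (HH_comm hp hc (hσ h) hh)
    have e1 : dm σ (dm ρ x) = (dm σ h) ^ p ^ (m₀ + 1) := by
      rw [hd, dm_mul_of_central' (KK_le_center hw) _,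
        dm_KK_eq_one σ hσ hp hc hr hw, mul_one,
        dm_pow (hσ h).1, e2, one_pow, mul_one]
    rcases hfin with hmr | hexp
    · rw [e1, hmr]
      have e3 : dm σ (h ^ p ^ r) = (dm σ h) ^ p ^ r := by
        rw [dm_pow (hσ h).1, e2, one_pow, mul_one]
      rw [← e3]
      exact dm_KK_eq_one σ hσ hp hc hr hhr
    · rw [e1]
      apply hexp
      rw [hdv]
      exact mul_mem hv.2 (KK_le_center hw')
  apply MulEquiv.ext
  intro y
  show ⁅ρ, σ⁆ y = y
  have hb := dm_bracket ρ σ (fun x => (cswap (hcent x) (dm σ x)).symm) y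
  rw [hB, hA _ (HH_le_phi0 hp hc (hσ _)), inv_one, one_mul] at hb
  calc ⁅ρ, σ⁆ y = y * (y⁻¹ * ⁅ρ, σ⁆ y) := by group
    _ = y * dm ⁅ρ, σ⁆ y := rfl
    _ = y := by rw [hb, mul_one]

end AutHNil
end Chunk4

section Chunk5
namespace AutHNil

open Subgroup

variable {G : Type*} [Group G]

theorem aut_eq_one_of_subsingleton [Subsingleton G] (σ : MulAut G) : σ = 1 :=
  MulEquiv.ext fun x => Subsingleton.elim _ _

theorem subsingleton_of_center_exp_one [Finite G] {p : ℕ} (hp : p.Prime) (hG : IsPGroup p G)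
    (h1 : Monoid.exponent (Subgroup.center G) = 1) : Subsingleton G := by
  haveI : Fact p.Prime := ⟨hp⟩
  by_contra hns
  rw [not_subsingleton_iff_nontrivial] at hns
  haveI := hns
  haveI := hG.center_nontrivial
  obtain ⟨z, hz⟩ := exists_ne (1 : Subgroup.center G)
  have h2 := Monoid.pow_exponent_eq_one z
  rw [h1, pow_one] at h2
  exact hz h2

theorem subsingleton_of_quot_exp_one [Finite G] {p : ℕ} (hp : p.Prime) (hG : IsPGroup p G)
    (h1 : Monoid.exponent (G ⧸ commutator G) = 1) : Subsingleton G := by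
  haveI : Fact p.Prime := ⟨hp⟩
  have hcomm : commutator G = ⊤ := by
    rw [eq_top_iff']
    intro g
    have h2 := Monoid.pow_exponent_eq_one ((g : G ⧸ commutator G))
    rw [h1, pow_one] at h2
    exact (QuotientGroup.eq_one_iff g).mp h2
  have hnil : Group.IsNilpotent G := hG.isNilpotent
  obtain ⟨n, hn⟩ := Subgroup.nilpotent_iff_lowerCentralSeries.mp hnil
  have hall : ∀ n, (⊤ : Subgroup G).lowerCentralSeries n = ⊤ := by
    intro n
    induction n with
    | zero => exact Subgroup.lowerCentralSeries_zero _
    | succ n ih =>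
      rw [Subgroup.lowerCentralSeries_succ, ih]
      have he : Subgroup.closure {x : G | ∃ p ∈ (⊤ : Subgroup G), ∃ q ∈ (⊤ : Subgroup G),
          p * q * p⁻¹ * q⁻¹ = x} = ⁅(⊤ : Subgroup G), (⊤ : Subgroup G)⁆ := by
        rw [Subgroup.commutator_def]
        congr 1
      rw [← _root_.commutator_def]
      exact hcomm
  rw [hall n] at hn
  constructor
  intro a b
  have ha : a ∈ (⊥ : Subgroup G) := by rw [← hn]; trivial
  have hb : b ∈ (⊥ : Subgroup G) := by rw [← hn]; trivial
  rw [Subgroup.mem_bot] at ha hb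
  rw [ha, hb]

end AutHNil
end Chunk5

open AutHNil in
/-- Let `G` be a finite `p`-group with `C_G(Φ(G)) ≤ Φ(G)` and let `H` be the
preimage of `Ω₁(ζ₂(G)/ζ₁(G))`, i.e. `H = {h ∈ ζ₂(G) : h^p ∈ ζ₁(G)}`. If
`p^r = exp(G/γ₂(G))` and `p^s = exp(ζ(G))`, then `Aut_H(G)` is nilpotent of class
at most `min r s + 1`: every left-normed commutator of `min r s + 2` elements of
`Aut_H(G)` is trivial. -/
theorem autH_nilpotent_of_class_le {G : Type*} [Group G] [Finite G]
    (p r s : ℕ) (hp : p.Prime) (hG : IsPGroup p G)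
    (hc : Subgroup.centralizer (frattini G : Set G) ≤ frattini G)
    (hr : Monoid.exponent (G ⧸ commutator G) = p ^ r)
    (hs : Monoid.exponent (Subgroup.center G) = p ^ s) :
    ∀ f : Fin (min r s + 2) → MulAut G,
      (∀ i, ∀ x : G,
        x⁻¹ * f i x ∈ upperCentralSeries G 2 ∧ (x⁻¹ * f i x) ^ p ∈ Subgroup.center G) →
      nestedComm (min r s + 1) f = 1 := by
  rcases Nat.eq_zero_or_pos (min r s) with h0 | hpos
  · rw [h0]
    intro f hf
    have hsub : Subsingleton G := by
      rcases Nat.min_eq_zero_iff.mp h0 with hr0 | hs0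
      · exact subsingleton_of_quot_exp_one hp hG (by rw [hr0, pow_zero] at hr; exact hr)
      · exact subsingleton_of_center_exp_one hp hG (by rw [hs0, pow_zero] at hs; exact hs)
    exact aut_eq_one_of_subsingleton _
  · obtain ⟨m₀, hm⟩ : ∃ m₀, min r s = m₀ + 1 := ⟨min r s - 1, by omega⟩
    have hfin : (m₀ + 1 = r) ∨ (∀ z ∈ Subgroup.center G, z ^ p ^ (m₀ + 1) = 1) := by
      rcases Nat.le_total r s with hrs | hsr
      · left
        rw [← hm, min_eq_left hrs]
      · right
        intro z hz
        have hms : m₀ + 1 = s := by rw [← hm, min_eq_right hsr]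
        have h1 : (⟨z, hz⟩ : Subgroup.center G) ^ p ^ s = 1 := by
          rw [← hs]
          exact Monoid.pow_exponent_eq_one _
        have h2 : z ^ p ^ s = 1 := by
          have h3 := congrArg Subtype.val h1
          simpa using h3
        rw [hms]
        exact h2
    rw [hm]
    intro f hf
    have hf' : ∀ i, IsA p (f i) := fun i x => hf i x
    have key : ∀ k : ℕ, ∀ hk : k + 2 ≤ m₀ + 1 + 2,
        Lev p r (k + 1) (nestedComm (k + 1) fun i : Fin (k + 2) => f (Fin.castLE hk i)) := by
      intro k
      induction k with
      | zero =>
        intro hk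
        exact Lev_one hp hc hr (hf' _) (hf' _)
      | succ k ih =>
        intro hk
        exact Lev_succ hp hc hr (hf' _) (ih (by omega))
    exact Lev_final hp hc hr (hf' _) (key m₀ (by omega)) hfin
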